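/- Let γ : ℝ → ℝ³ be a C² curve with |γ'| ≡ 1, γ(s+ℓ) = γ(s) + a for all s (ℓ > 0, a ∈ ℝ³), and |γ''(s)| ≤ 1/r for all s with r > 0. Let Γ : ℝ → ℝ³ be Lipschitz with |Γ'(s)| = 1 for a.e. s and Γ(s+L) = Γ(s) + a for all s (L > 0). If σ is a reparametrization of γ for Γ and ρ ≥ sup_{s ∈ ℝ} |Γ(s) − γ(σ(s))|, then (sup_{s ∈ ℝ} |Γ(s) − γ(σ(s))|)² ≤ (√2 ρ + ρ²/L) · F_{γ,σ,ρ}(Γ). -/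

import Mathlib

noncomputable section
open Real MeasureTheory

/-- `ℝ³` as Euclidean space. -/
abbrev R3 : Type := EuclideanSpace ℝ (Fin 3)

/-- The cut-off function `f_ρ(d²) = max(1 - d²/ρ², 0)`. -/
def fcut (ρ d2 : ℝ) : ℝ := max (1 - d2 / ρ ^ 2) 0

/-- The discrepancy functional
`F_{γ,σ,ρ}(Γ) = ∫₀^L (1 - f_ρ(|Γ(s) - γ(σ(s))|²) (γ'(σ(s)) · Γ'(s))) ds`. -/
def Fdisc (γ Γ : ℝ → R3) (σ : ℝ → ℝ) (ρ L : ℝ) : ℝ :=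
  ∫ s in (0:ℝ)..L,
    (1 - fcut ρ (‖Γ s - γ (σ s)‖ ^ 2) * (inner ℝ (deriv γ (σ s)) (deriv Γ s) : ℝ))

open Filter Set intervalIntegral
open scoped RealInnerProductSpace

section Helpers

lemma lip_deriv_abs_le {C : NNReal} {g : ℝ → ℝ} (hg : LipschitzWith C g) (x : ℝ) :
    |deriv g x| ≤ C := by
  by_cases hx : DifferentiableAt ℝ g x
  · have h1 : Filter.Tendsto (slope g x) (nhdsWithin x {x}ᶜ) (nhds (deriv g x)) :=
      hasDerivAt_iff_tendsto_slope.mp hx.hasDerivAt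
    refine le_of_tendsto h1.abs ?_
    filter_upwards [self_mem_nhdsWithin] with y hy
    have hyx : y ≠ x := hy
    rw [slope_def_field, abs_div, div_le_iff₀ (by simp [abs_pos, sub_ne_zero.mpr hyx])]
    simpa [Real.dist_eq, abs_sub_comm] using hg.dist_le_mul y x
  · simp [deriv_zero_of_not_differentiableAt hx]

lemma lip_deriv_intervalIntegrable {C : NNReal} {g : ℝ → ℝ} (hg : LipschitzWith C g)
    (a b : ℝ) : IntervalIntegrable (deriv g) volume a b := by
  rw [intervalIntegrable_iff]
  refine Measure.integrableOn_of_bounded (M := (C:ℝ)) measure_Ioc_lt_top.ne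
    (measurable_deriv g).aestronglyMeasurable ?_
  exact Eventually.of_forall fun x => by simpa [Real.norm_eq_abs] using lip_deriv_abs_le hg x

/-- Fundamental theorem of calculus for Lipschitz functions. -/
lemma lip_ftc {C : NNReal} {g : ℝ → ℝ} (hg : LipschitzWith C g) {a b : ℝ} (hab : a ≤ b) :
    ∫ t in a..b, deriv g t = g b - g a := by
  set h : ℕ → ℝ := fun n => 1 / (n + 1) with hh
  have hhpos : ∀ n, 0 < h n := fun n => by positivity
  have hh0 : Tendsto h atTop (nhds 0) := tendsto_one_div_add_atTop_nhds_zero_nat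
  have hcont : Continuous g := hg.continuous
  have hint : ∀ u v : ℝ, IntervalIntegrable g volume u v := fun u v =>
    hcont.intervalIntegrable u v
  -- the difference quotient integral
  set F : ℕ → ℝ → ℝ := fun n t => (g (t + h n) - g t) / h n with hF
  -- Part 1: rearrangement
  have part1 : ∀ n, (∫ t in a..b, F n t) =
      ((∫ t in b..b + h n, g t) - ∫ t in a..a + h n, g t) / h n := by
    intro n
    have hintc : IntervalIntegrable (fun t => g (t + h n)) volume a b :=
      Continuous.intervalIntegrable (by continuity) a b
    have e1 : (∫ t in a..b, F n t) = ((∫ t in a..b, g (t + h n)) - ∫ t in a..b, g t) / h n := by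
      simp only [hF]
      rw [← intervalIntegral.integral_sub hintc (hint a b), ← intervalIntegral.integral_div]
    have e2 : (∫ t in a..b, g (t + h n)) = ∫ t in a + h n..b + h n, g t :=
      intervalIntegral.integral_comp_add_right g (h n)
    have e3 : (∫ t in a..a + h n, g t) + (∫ t in a + h n..b + h n, g t)
        = ∫ t in a..b + h n, g t := intervalIntegral.integral_add_adjacent_intervals
          (hint _ _) (hint _ _)
    have e4 : (∫ t in a..b, g t) + (∫ t in b..b + h n, g t) = ∫ t in a..b + h n, g t :=
      intervalIntegral.integral_add_adjacent_intervals (hint _ _) (hint _ _)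
    rw [e1, e2]
    congr 1
    linarith [e3, e4]
  -- Part 2: limit of endpoint terms
  have endpt : ∀ c : ℝ, Tendsto (fun n => (∫ t in c..c + h n, g t) / h n) atTop (nhds (g c)) := by
    intro c
    have hD : HasDerivAt (fun u => ∫ t in c..u, g t) (g c) c :=
      intervalIntegral.integral_hasDerivAt_right (hint c c)
        hcont.aestronglyMeasurable.stronglyMeasurableAtFilter hcont.continuousAt
    have hslope := hasDerivAt_iff_tendsto_slope.mp hD
    have htend : Tendsto (fun n => c + h n) atTop (nhdsWithin c {c}ᶜ) := by
      apply tendsto_nhdsWithin_of_tendsto_nhds_of_eventually_within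
      · simpa using (tendsto_const_nhds.add hh0)
      · exact Eventually.of_forall fun n => by
          simp only [mem_compl_iff, mem_singleton_iff]
          nlinarith [hhpos n]
    have := hslope.comp htend
    simp only [Function.comp_def, slope_def_field] at this
    convert this using 2 with n
    rw [intervalIntegral.integral_same]
    rw [sub_zero, add_sub_cancel_left]
  have part2 : Tendsto (fun n => ∫ t in a..b, F n t) atTop (nhds (g b - g a)) := by
    have := ((endpt b).sub (endpt a))
    apply Tendsto.congr' (Eventually.of_forall fun n => ?_) this
    rw [part1 n, sub_div]
  -- Part 3: dominated convergence
  have part3 : Tendsto (fun n => ∫ t in a..b, F n t) atTop (nhds (∫ t in a..b, deriv g t)) := by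
    apply intervalIntegral.tendsto_integral_filter_of_dominated_convergence (fun _ => (C : ℝ))
    · exact Eventually.of_forall fun n =>
        ((hcont.comp (by continuity)).sub hcont).div_const _ |>.aestronglyMeasurable
    · refine Eventually.of_forall fun n => Eventually.of_forall fun t _ => ?_
      have := hg.dist_le_mul (t + h n) t
      simp only [Real.dist_eq, add_sub_cancel_left] at this
      rw [Real.norm_eq_abs, hF, abs_div, abs_of_pos (hhpos n),
        div_le_iff₀ (hhpos n)]
      simpa [abs_of_pos (hhpos n)] using this
    · exact intervalIntegrable_const
    · have hdiff := hg.ae_differentiableAt (μ := volume)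
      filter_upwards [hdiff] with t ht _
      have hslope := hasDerivAt_iff_tendsto_slope.mp ht.hasDerivAt
      have htend : Tendsto (fun n => t + h n) atTop (nhdsWithin t {t}ᶜ) := by
        apply tendsto_nhdsWithin_of_tendsto_nhds_of_eventually_within
        · simpa using (tendsto_const_nhds.add hh0)
        · exact Eventually.of_forall fun n => by
            simp only [mem_compl_iff, mem_singleton_iff]
            nlinarith [hhpos n]
      have := hslope.comp htend
      simp only [Function.comp_def, slope_def_field, add_sub_cancel_left] at this
      exact this
  exact tendsto_nhds_unique part3 part2

section Sigma
variable {γ : ℝ → R3} {r : ℝ}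

/-- core local estimate, ordered version -/
lemma local_est_core (hγ : ContDiff ℝ 2 γ)
    (harcγ : ∀ s : ℝ, ‖deriv γ s‖ = 1)
    (hcurv : ∀ s : ℝ, ‖deriv (deriv γ) s‖ ≤ 1 / r) (hr : 0 < r)
    (p q : R3) (τs τt : ℝ)
    (hps : ‖p - γ τs‖ < r / 8)
    (hos : ⟪p - γ τs, deriv γ τs⟫ = 0)
    (hot : ⟪q - γ τt, deriv γ τt⟫ = 0)
    (hclose : τs - τt ≤ r / 2) (hle : τt ≤ τs) :
    τs - τt ≤ 4 * ‖p - q‖ := by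
  have hγ2 : ContDiff ℝ (1 + 1) γ := by
    rwa [show ((1:WithTop ℕ∞) + 1) = 2 by norm_num]
  obtain ⟨hdiff1, -, hd1⟩ := contDiff_succ_iff_deriv.mp hγ2
  have hdiff2 : Differentiable ℝ (deriv γ) := hd1.differentiable (by norm_num)
  -- γ is 1-Lipschitz
  have hγlip : LipschitzWith 1 γ := by
    apply lipschitzWith_of_nnnorm_deriv_le hdiff1
    intro x
    rw [← NNReal.coe_le_coe]
    simp [← norm_toNNReal, harcγ x]
  set h : ℝ → ℝ := fun τ => ⟪p - γ τ, deriv γ τ⟫ with hh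
  have hder : ∀ τ : ℝ, HasDerivAt h (⟪p - γ τ, deriv (deriv γ) τ⟫ + ⟪-(deriv γ τ), deriv γ τ⟫) τ := by
    intro τ
    have h0 : HasDerivAt (fun τ => p - γ τ) (-(deriv γ τ)) τ := by
      exact ((hasDerivAt_const τ p).sub (hdiff1 τ).hasDerivAt).congr_deriv (by simp)
    exact HasDerivAt.inner ℝ h0 (hdiff2 τ).hasDerivAt
  have hderle : ∀ τ ∈ Set.Icc τt τs, deriv h τ ≤ -(3/8 : ℝ) := by
    intro τ hτ
    rw [(hder τ).deriv]
    have h1 : ⟪-(deriv γ τ), deriv γ τ⟫ = -1 := by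
      rw [inner_neg_left, real_inner_self_eq_norm_sq, harcγ τ]
      norm_num
    have h2 : ‖p - γ τ‖ ≤ 5 * r / 8 := by
      have e1 : ‖p - γ τ‖ ≤ ‖p - γ τs‖ + ‖γ τs - γ τ‖ := by
        rw [show p - γ τ = (p - γ τs) + (γ τs - γ τ) by abel]
        exact norm_add_le _ _
      have e2 : ‖γ τs - γ τ‖ ≤ |τs - τ| := by
        have := hγlip.dist_le_mul τs τ
        simpa [dist_eq_norm, Real.dist_eq] using this
      have e3 : |τs - τ| ≤ r / 2 := by
        rw [abs_of_nonneg (by linarith [hτ.2])]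
        linarith [hτ.1]
      linarith
    have h3 : ⟪p - γ τ, deriv (deriv γ) τ⟫ ≤ 5/8 := by
      calc ⟪p - γ τ, deriv (deriv γ) τ⟫ ≤ ‖p - γ τ‖ * ‖deriv (deriv γ) τ‖ :=
            real_inner_le_norm _ _
        _ ≤ (5 * r / 8) * (1 / r) := by
            apply mul_le_mul h2 (hcurv τ) (norm_nonneg _) (by positivity)
        _ = 5/8 := by field_simp
    linarith
  -- ψ is strictly decreasing on the interval
  have hψ : StrictAntiOn (fun τ => h τ + τ/4) (Set.Icc τt τs) := by
    apply strictAntiOn_of_deriv_neg (convex_Icc _ _)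
    · exact Continuous.continuousOn (by
        have : Continuous h := by
          apply Continuous.inner
          · exact (continuous_const.sub hdiff1.continuous)
          · exact hd1.continuous
        fun_prop)
    · intro x hx
      rw [interior_Icc] at hx
      have hd : HasDerivAt (fun τ => h τ + τ/4) (deriv h x + 1/4) x := by
        have := (hder x).add ((hasDerivAt_id x).div_const 4)
        rw [(hder x).deriv]
        exact this
      rw [hd.deriv]
      have := hderle x ⟨hx.1.le, hx.2.le⟩
      linarith
  -- conclude
  rcases eq_or_lt_of_le hle with heq | hlt
  · rw [heq, sub_self]
    positivity
  · have := hψ ⟨le_refl _, hle⟩ ⟨hle, le_refl _⟩ hlt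
    simp only at this
    -- h τs = 0
    have hhs : h τs = 0 := hos
    -- h τt ≤ ‖p - q‖
    have hht : h τt ≤ ‖p - q‖ := by
      have : h τt = ⟪p - q, deriv γ τt⟫ := by
        rw [hh]
        simp only
        rw [show p - γ τt = (p - q) + (q - γ τt) by abel, inner_add_left, hot, add_zero]
      rw [this]
      calc ⟪p - q, deriv γ τt⟫ ≤ ‖p - q‖ * ‖deriv γ τt‖ := real_inner_le_norm _ _
        _ = ‖p - q‖ := by rw [harcγ τt, mul_one]
    linarith
end Sigma

section Sigma2
variable {γ : ℝ → R3} {r : ℝ}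

lemma local_est (hγ : ContDiff ℝ 2 γ)
    (harcγ : ∀ s : ℝ, ‖deriv γ s‖ = 1)
    (hcurv : ∀ s : ℝ, ‖deriv (deriv γ) s‖ ≤ 1 / r) (hr : 0 < r)
    (p q : R3) (τs τt : ℝ)
    (hps : ‖p - γ τs‖ < r / 8) (hqt : ‖q - γ τt‖ < r / 8)
    (hos : ⟪p - γ τs, deriv γ τs⟫ = 0)
    (hot : ⟪q - γ τt, deriv γ τt⟫ = 0)
    (hclose : |τs - τt| ≤ r / 2) :
    |τs - τt| ≤ 4 * ‖p - q‖ := by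
  rcases le_total τt τs with hle | hle
  · rw [abs_of_nonneg (by linarith)]
    exact local_est_core hγ harcγ hcurv hr p q τs τt hps hos hot
      (by rwa [abs_of_nonneg (by linarith)] at hclose) hle
  · rw [abs_of_nonpos (by linarith)]
    rw [norm_sub_rev]
    have := local_est_core hγ harcγ hcurv hr q p τt τs hqt hot hos
      (by rw [abs_of_nonpos (by linarith)] at hclose; linarith) hle
    linarith

variable {Γ : ℝ → R3} {σ : ℝ → ℝ} {K : NNReal}

/-- no large jumps at scale δ -/
lemma sigma_no_jump (hγ : ContDiff ℝ 2 γ)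
    (harcγ : ∀ s : ℝ, ‖deriv γ s‖ = 1)
    (hcurv : ∀ s : ℝ, ‖deriv (deriv γ) s‖ ≤ 1 / r) (hr : 0 < r)
    (hΓlip : LipschitzWith K Γ) (hσc : Continuous σ)
    (hd : ∀ s : ℝ, ‖Γ s - γ (σ s)‖ < r / 8)
    (ho : ∀ s : ℝ, ⟪Γ s - γ (σ s), deriv γ (σ s)⟫ = 0)
    {s t : ℝ} (hst : s ≤ t) (hδ : t - s ≤ r / (32 * (K + 1))) :
    |σ t - σ s| ≤ r / 4 := by
  by_contra hcon
  push_neg at hcon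
  set B : Set ℝ := {x ∈ Set.Icc s t | r / 4 ≤ |σ x - σ s|} with hB
  have hBne : B.Nonempty := ⟨t, ⟨hst, le_refl _⟩, hcon.le⟩
  have hBclosed : IsClosed B := by
    apply IsClosed.inter isClosed_Icc
    exact isClosed_le continuous_const ((hσc.sub continuous_const).abs)
  have hBbdd : BddBelow B := ⟨s, fun x hx => hx.1.1⟩
  set x₀ := sInf B with hx₀
  have hx₀B : x₀ ∈ B := hBclosed.csInf_mem hBne hBbdd
  have hsx₀ : s < x₀ := by
    rcases lt_or_eq_of_le hx₀B.1.1 with h | h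
    · exact h
    · exfalso
      have := hx₀B.2
      rw [← h] at this
      simp at this
      linarith [hr]
  -- on [s, x₀), |σ x - σ s| < r/4
  have hsmall : ∀ x ∈ Set.Ico s x₀, |σ x - σ s| ≤ r / 4 := by
    intro x hx
    by_contra hcon2
    push_neg at hcon2
    have : x ∈ B := ⟨⟨hx.1, hx.2.le.trans hx₀B.1.2⟩, hcon2.le⟩
    exact absurd (csInf_le hBbdd this) (not_le.mpr hx.2)
  -- hence at x₀ by continuity
  have hx₀small : |σ x₀ - σ s| ≤ r / 4 := by
    have hcl : x₀ ∈ closure (Set.Ico s x₀) := by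
      rw [closure_Ico (ne_of_lt hsx₀)]
      exact ⟨hsx₀.le, le_refl _⟩
    have : closure (Set.Ico s x₀) ⊆ {x | |σ x - σ s| ≤ r / 4} := by
      apply closure_minimal hsmall
      exact isClosed_le ((hσc.sub continuous_const).abs) continuous_const
    exact this hcl
  -- now apply local estimate: |σ x₀ - σ s| ≤ 4 K (x₀ - s) < r/4
  have hloc : |σ x₀ - σ s| ≤ 4 * ‖Γ x₀ - Γ s‖ :=
    local_est hγ harcγ hcurv hr (Γ x₀) (Γ s) (σ x₀) (σ s) (hd x₀) (hd s)
      (ho x₀) (ho s) (by linarith)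
  have hΓb : ‖Γ x₀ - Γ s‖ ≤ K * (t - s) := by
    have := hΓlip.dist_le_mul x₀ s
    rw [dist_eq_norm, Real.dist_eq] at this
    have habs : |x₀ - s| ≤ t - s := by
      rw [abs_of_nonneg (by linarith)]
      linarith [hx₀B.1.2]
    calc ‖Γ x₀ - Γ s‖ ≤ K * |x₀ - s| := this
      _ ≤ K * (t - s) := by
        apply mul_le_mul_of_nonneg_left habs K.coe_nonneg
  have hKδ : (K : ℝ) * (t - s) ≤ K * (r / (32 * (K + 1))) := by
    apply mul_le_mul_of_nonneg_left hδ K.coe_nonneg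
  have hfrac : (K : ℝ) * (r / (32 * (K + 1))) < r / 16 := by
    have hK0 : (0:ℝ) ≤ K := K.coe_nonneg
    have e : (K : ℝ) * (r / (32 * (K + 1))) = (K * r) / (32 * (K + 1)) := by ring
    rw [e, div_lt_div_iff₀ (by positivity) (by norm_num)]
    nlinarith [hr]
  have : r / 4 ≤ |σ x₀ - σ s| := hx₀B.2
  linarith

/-- σ is globally Lipschitz with constant 4K -/
lemma sigma_lip (hγ : ContDiff ℝ 2 γ)
    (harcγ : ∀ s : ℝ, ‖deriv γ s‖ = 1)
    (hcurv : ∀ s : ℝ, ‖deriv (deriv γ) s‖ ≤ 1 / r) (hr : 0 < r)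
    (hΓlip : LipschitzWith K Γ) (hσc : Continuous σ)
    (hd : ∀ s : ℝ, ‖Γ s - γ (σ s)‖ < r / 8)
    (ho : ∀ s : ℝ, ⟪Γ s - γ (σ s), deriv γ (σ s)⟫ = 0) :
    LipschitzWith (4 * K) σ := by
  set δ : ℝ := r / (32 * (K + 1)) with hδdef
  have hδpos : 0 < δ := by positivity
  have hlocal : ∀ s t : ℝ, s ≤ t → t - s ≤ δ → |σ t - σ s| ≤ 4 * K * (t - s) := by
    intro s t hst hts
    have h1 : |σ t - σ s| ≤ r / 4 :=
      sigma_no_jump hγ harcγ hcurv hr hΓlip hσc hd ho hst hts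
    have h2 : |σ t - σ s| ≤ 4 * ‖Γ t - Γ s‖ := by
      rw [abs_sub_comm (σ t) (σ s), norm_sub_rev (Γ t) (Γ s)]
      exact local_est hγ harcγ hcurv hr (Γ s) (Γ t) (σ s) (σ t) (hd s) (hd t)
        (ho s) (ho t) (by rw [abs_sub_comm]; linarith)
    have h3 : ‖Γ t - Γ s‖ ≤ K * (t - s) := by
      have := hΓlip.dist_le_mul t s
      rw [dist_eq_norm, Real.dist_eq, abs_of_nonneg (by linarith)] at this
      exact this
    calc |σ t - σ s| ≤ 4 * ‖Γ t - Γ s‖ := h2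
      _ ≤ 4 * (K * (t - s)) := by linarith
      _ = 4 * K * (t - s) := by ring
  have hglobal : ∀ n : ℕ, ∀ s t : ℝ, s ≤ t → t - s ≤ (n + 1) * δ →
      |σ t - σ s| ≤ 4 * K * (t - s) := by
    intro n
    induction n with
    | zero => intro s t hst h; exact hlocal s t hst (by simpa using h)
    | succ n ih =>
      intro s t hst h
      rcases le_or_gt (t - s) δ with h1 | h1
      · exact hlocal s t hst h1
      · have hmid : s + δ ≤ t := by linarith
        have e1 := ih (s + δ) t (by linarith) (by push_cast; push_cast at h; linarith)
        have e2 := hlocal s (s + δ) (by linarith) (by linarith)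
        have tri : |σ t - σ s| ≤ |σ t - σ (s + δ)| + |σ (s + δ) - σ s| :=
          abs_sub_le _ _ _
        have hK0 : (0:ℝ) ≤ (K:ℝ) := K.coe_nonneg
        nlinarith [e1, e2]
  apply LipschitzWith.of_dist_le_mul
  have main : ∀ x y : ℝ, x ≤ y → |σ y - σ x| ≤ 4 * K * (y - x) := by
    intro x y hxy
    set n := ⌈(y - x) / δ⌉₊ with hn
    have h1 : (y - x) / δ ≤ n := Nat.le_ceil _
    have h2 : y - x ≤ (n + 1) * δ := by
      rw [div_le_iff₀ hδpos] at h1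
      nlinarith [hδpos]
    exact hglobal n x y hxy h2
  intro x y
  rcases le_total x y with hxy | hxy
  · rw [Real.dist_eq, Real.dist_eq, abs_sub_comm (σ x) (σ y), abs_sub_comm x y,
      abs_of_nonneg (show (0:ℝ) ≤ y - x by linarith)]
    push_cast
    exact main x y hxy
  · rw [Real.dist_eq, Real.dist_eq, abs_of_nonneg (show (0:ℝ) ≤ x - y by linarith)]
    push_cast
    exact main y x hxy
end Sigma2

lemma fcut_eq {ρ d : ℝ} (hρ : 0 < ρ) (hd : 0 ≤ d) (hdρ : d ≤ ρ) :
    fcut ρ (d ^ 2) = 1 - d ^ 2 / ρ ^ 2 := by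
  unfold fcut
  apply max_eq_left
  rw [sub_nonneg, div_le_one (by positivity)]
  exact pow_le_pow_left₀ hd hdρ 2

/-- (i): `d² ≤ ρ² (1 - f u)` -/
lemma ptwise_i {ρ d u : ℝ} (hρ : 0 < ρ) (hd : 0 ≤ d) (hdρ : d ≤ ρ) (hu : |u| ≤ 1) :
    d ^ 2 ≤ ρ ^ 2 * (1 - fcut ρ (d ^ 2) * u) := by
  rw [fcut_eq hρ hd hdρ]
  rw [abs_le] at hu
  have e : ρ ^ 2 * (1 - (1 - d ^ 2 / ρ ^ 2) * u) = ρ^2 - (ρ^2 - d^2) * u := by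
    field_simp
  rw [e]
  nlinarith [mul_nonneg (show (0:ℝ) ≤ ρ^2 - d^2 by nlinarith) (show (0:ℝ) ≤ 1 - u by linarith)]

lemma ptwise_nonneg {ρ d u : ℝ} (hρ : 0 < ρ) (hd : 0 ≤ d) (hdρ : d ≤ ρ) (hu : |u| ≤ 1) :
    0 ≤ 1 - fcut ρ (d ^ 2) * u := by
  have h := ptwise_i hρ hd hdρ hu
  nlinarith [sq_nonneg d, mul_pos hρ hρ]

/-- (ii): `2 d √(1-u²) ≤ 2 √2 ρ (1 - f u)` -/
lemma ptwise_ii {ρ d u : ℝ} (hρ : 0 < ρ) (hd : 0 ≤ d) (hdρ : d ≤ ρ) (hu : |u| ≤ 1) :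
    2 * d * Real.sqrt (1 - u ^ 2) ≤ 2 * Real.sqrt 2 * ρ * (1 - fcut ρ (d ^ 2) * u) := by
  have hA : 0 ≤ 1 - fcut ρ (d ^ 2) * u := ptwise_nonneg hρ hd hdρ hu
  rw [abs_le] at hu
  have h1u : 0 ≤ 1 - u ^ 2 := by nlinarith
  set A := 1 - fcut ρ (d ^ 2) * u with hAdef
  set B := ρ^2 - (ρ^2 - d^2)*u with hBdef
  have hAB : ρ^2 * A = B := by
    rw [hAdef, fcut_eq hρ hd hdρ, hBdef]
    field_simp
  -- core polynomial inequality
  have hcore : ρ^2 * d^2 * (1 - u^2) ≤ 2 * B^2 := by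
    set v := 1 - u with hv
    set A₂ := 2*(ρ^2-d^2)^2 + d^2*ρ^2 with hA2def
    have hA2 : 0 < A₂ := by
      rcases eq_or_lt_of_le hd with h0 | h0
      · rw [hA2def, ← h0]
        nlinarith [mul_pos hρ hρ]
      · rw [hA2def]
        nlinarith [mul_pos (mul_pos h0 h0) (mul_pos hρ hρ), sq_nonneg (ρ^2 - d^2)]
    have iden : 4*A₂*(2*B^2 - ρ^2 * d^2 * (1 - u^2)) =
        (2*A₂*v + 2*d^2*(ρ^2-2*d^2))^2 + 4*d^4*ρ^2*(3*ρ^2-2*d^2) := by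
      rw [hBdef, hA2def, hv]; ring
    have h5 : (0:ℝ) ≤ 3*ρ^2 - 2*d^2 := by nlinarith
    have h4 : 0 ≤ 4*A₂*(2*B^2 - ρ^2 * d^2 * (1 - u^2)) := by
      rw [iden]
      have h6 : (0:ℝ) ≤ 4*d^4*ρ^2*(3*ρ^2-2*d^2) :=
        mul_nonneg (mul_nonneg (mul_nonneg (by norm_num) (pow_nonneg hd 4)) (sq_nonneg ρ)) h5
      have := sq_nonneg (2*A₂*v + 2*d^2*(ρ^2-2*d^2))
      linarith
    by_contra hcon
    push_neg at hcon
    nlinarith [mul_pos (show (0:ℝ) < 4*A₂ by linarith)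
      (show (0:ℝ) < ρ^2 * d^2 * (1 - u^2) - 2*B^2 by linarith)]
  -- compare squares
  have key : (2 * d * Real.sqrt (1 - u ^ 2)) ^ 2 ≤ (2 * Real.sqrt 2 * ρ * A) ^ 2 := by
    have e1 : (2 * d * Real.sqrt (1 - u ^ 2)) ^ 2 = 4 * (d^2 * (1 - u^2)) := by
      rw [mul_pow, mul_pow, Real.sq_sqrt h1u]; ring
    have e2 : (2 * Real.sqrt 2 * ρ * A) ^ 2 = 8 * (ρ^2 * A^2) := by
      rw [mul_pow, mul_pow, mul_pow, Real.sq_sqrt (by norm_num : (0:ℝ) ≤ 2)]; ring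
    rw [e1, e2]
    have hmul : ρ^2 * (4 * (d^2 * (1-u^2))) ≤ ρ^2 * (8 * (ρ^2 * A^2)) := by
      have e3 : ρ^2 * (8 * (ρ^2 * A^2)) = 8 * (ρ^2*A)^2 := by ring
      rw [e3, ← hAB] at *
      nlinarith [hcore]
    exact le_of_mul_le_mul_left hmul (by positivity)
  have h2 : 0 ≤ 2 * d * Real.sqrt (1 - u ^ 2) := by positivity
  have h3 : 0 ≤ 2 * Real.sqrt 2 * ρ * A := by positivity
  have := Real.sqrt_le_sqrt key
  rwa [Real.sqrt_sq h2, Real.sqrt_sq h3] at this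

end Helpers

/-- Lemma 3.8: the sup distance squared is controlled by `F`. -/
theorem stmt5
    (γ : ℝ → R3) (hγ : ContDiff ℝ 2 γ)
    (harcγ : ∀ s : ℝ, ‖deriv γ s‖ = 1)
    (ℓ : ℝ) (hℓ : 0 < ℓ) (a : R3) (hperγ : ∀ s : ℝ, γ (s + ℓ) = γ s + a)
    (r : ℝ) (hr : 0 < r)
    (hcurv : ∀ s : ℝ, ‖deriv (deriv γ) s‖ ≤ 1 / r)
    (Γ : ℝ → R3) (hΓlip : ∃ K : NNReal, LipschitzWith K Γ)
    (harcΓ : ∀ᵐ s : ℝ ∂volume, ‖deriv Γ s‖ = 1)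
    (L : ℝ) (hL : 0 < L) (hperΓ : ∀ s : ℝ, Γ (s + L) = Γ s + a)
    (σ : ℝ → ℝ) (hσc : Continuous σ)
    (hσ : ∀ s : ℝ,
      σ (s + L) = σ s + ℓ ∧
      ‖Γ s - γ (σ s)‖ < r / 8 ∧
      (inner ℝ (Γ s - γ (σ s)) (deriv γ (σ s)) : ℝ) = 0)
    (ρ : ℝ) (hρpos : 0 < ρ)
    (hρ : (⨆ s : ℝ, ‖Γ s - γ (σ s)‖) ≤ ρ) :
    (⨆ s : ℝ, ‖Γ s - γ (σ s)‖) ^ 2 ≤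
      (Real.sqrt 2 * ρ + ρ ^ 2 / L) * Fdisc γ Γ σ ρ L := by
  classical
  obtain ⟨K, hΓlipK⟩ := hΓlip
  -- basic data
  have hd : ∀ s : ℝ, ‖Γ s - γ (σ s)‖ < r / 8 := fun s => (hσ s).2.1
  have ho : ∀ s : ℝ, ⟪Γ s - γ (σ s), deriv γ (σ s)⟫ = 0 := fun s => (hσ s).2.2
  have hγ2 : ContDiff ℝ (1 + 1) γ := by
    rwa [show ((1:WithTop ℕ∞) + 1) = 2 by norm_num]
  obtain ⟨hdiff1, -, hd1⟩ := contDiff_succ_iff_deriv.mp hγ2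
  have hγlip : LipschitzWith 1 γ := by
    apply lipschitzWith_of_nnnorm_deriv_le hdiff1
    intro x
    rw [← NNReal.coe_le_coe]
    simp [← norm_toNNReal, harcγ x]
  have hσlip : LipschitzWith (4 * K) σ :=
    sigma_lip hγ harcγ hcurv hr hΓlipK hσc hd ho
  -- the functions
  set w : ℝ → R3 := fun s => Γ s - γ (σ s) with hw
  set D : ℝ → ℝ := fun s => ‖w s‖ with hDdef
  set g : ℝ → ℝ := fun s => D s ^ 2 with hgdef
  set u : ℝ → ℝ := fun s => ⟪deriv γ (σ s), deriv Γ s⟫ with hudef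
  set Fi : ℝ → ℝ := fun s => 1 - fcut ρ (D s ^ 2) * u s with hFidef
  have hFdisc : Fdisc γ Γ σ ρ L = ∫ s in (0:ℝ)..L, Fi s := rfl
  set F : ℝ := Fdisc γ Γ σ ρ L with hFdef
  -- continuity
  have hΓc : Continuous Γ := hΓlipK.continuous
  have hwc : Continuous w := hΓc.sub (hdiff1.continuous.comp hσc)
  have hDc : Continuous D := hwc.norm
  have hgc : Continuous g := by fun_prop
  -- periodicity
  have hwper : ∀ s, w (s + L) = w s := by
    intro s
    show Γ (s + L) - γ (σ (s + L)) = Γ s - γ (σ s)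
    rw [hperΓ s, (hσ s).1, hperγ (σ s)]
    abel
  have hDper : Function.Periodic D L := fun s => by simp only [hDdef, hwper s]
  have hgper : Function.Periodic g L := fun s => by simp only [hgdef, hDper s]
  -- the maximizer
  have hbdd : BddAbove (Set.range D) := ⟨r / 8, by
    rintro x ⟨s, rfl⟩
    exact (hd s).le⟩
  obtain ⟨s₀, hs₀mem, hs₀max⟩ :=
    isCompact_Icc.exists_isMaxOn (s := Set.Icc (0:ℝ) L) ⟨0, le_refl _, hL.le⟩
      hDc.continuousOn
  have hmax : ∀ x : ℝ, D x ≤ D s₀ := by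
    intro x
    obtain ⟨y, hy, hxy⟩ := hDper.exists_mem_Ico₀ hL x
    rw [hxy]
    exact hs₀max ⟨hy.1, hy.2.le⟩
  have hM : iSup D = D s₀ := by
    apply le_antisymm
    · exact ciSup_le hmax
    · exact le_ciSup hbdd s₀
  have hDρ : ∀ s, D s ≤ ρ := fun s => (hmax s).trans (hM ▸ hρ)
  have hD0 : ∀ s, 0 ≤ D s := fun s => norm_nonneg _
  -- g is Lipschitz
  set CD : NNReal := K + 1 * (4 * K) with hCD
  have hDlip : LipschitzWith (1 * CD) D :=
    lipschitzWith_one_norm.comp (hΓlipK.sub (hγlip.comp hσlip))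
  set Cg : NNReal := (1 * CD) * Real.toNNReal (r / 4) with hCg
  have hglip : LipschitzWith Cg g := by
    apply LipschitzWith.of_dist_le_mul
    intro x y
    rw [Real.dist_eq]
    have e : g x - g y = (D x - D y) * (D x + D y) := by rw [hgdef]; ring
    rw [e, abs_mul]
    have h1 : |D x - D y| ≤ (1 * CD : NNReal) * |x - y| := by
      simpa [Real.dist_eq] using hDlip.dist_le_mul x y
    have h2 : |D x + D y| ≤ r / 4 := by
      rw [abs_of_nonneg (by positivity)]
      have := hd x; have := hd y
      simp only [hDdef, hw] at *
      linarith
    calc |D x - D y| * |D x + D y| ≤ ((1 * CD : NNReal) * |x - y|) * (r / 4) :=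
          mul_le_mul h1 h2 (abs_nonneg _) (by positivity)
      _ = (Cg : ℝ) * dist x y := by
          rw [hCg, Real.dist_eq]
          push_cast [Real.coe_toNNReal _ (by positivity : (0:ℝ) ≤ r / 4)]
          ring
  -- a.e. derivative formula and bounds
  have hu1 : ∀ᵐ s : ℝ ∂volume, |u s| ≤ 1 := by
    filter_upwards [harcΓ] with s hs
    calc |u s| ≤ ‖deriv γ (σ s)‖ * ‖deriv Γ s‖ := abs_real_inner_le_norm _ _
      _ = 1 := by rw [harcγ (σ s), hs, mul_one]
  have hae : ∀ᵐ s : ℝ ∂volume,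
      |deriv g s| ≤ 2 * D s * Real.sqrt (1 - u s ^ 2) ∧ |u s| ≤ 1 := by
    filter_upwards [hΓlipK.ae_differentiableAt (μ := volume),
      hσlip.ae_differentiableAt (μ := volume), harcΓ, hu1] with s hΓd hσd hnorm hus
    refine ⟨?_, hus⟩
    -- derivative of w
    have hwd : HasDerivAt w (deriv Γ s - deriv σ s • deriv γ (σ s)) s := by
      apply HasDerivAt.sub hΓd.hasDerivAt
      exact HasDerivAt.scomp s (hdiff1 (σ s)).hasDerivAt hσd.hasDerivAt
    have hgexp : g = fun t => ⟪w t, w t⟫ :=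
      funext fun t => (real_inner_self_eq_norm_sq (w t)).symm
    have hgd : HasDerivAt g
        (⟪w s, deriv Γ s - deriv σ s • deriv γ (σ s)⟫ +
          ⟪deriv Γ s - deriv σ s • deriv γ (σ s), w s⟫) s := by
      rw [hgexp]
      exact HasDerivAt.inner ℝ hwd hwd
    have ho' : ⟪w s, deriv γ (σ s)⟫ = (0:ℝ) := ho s
    have h2 : ⟪deriv Γ s - deriv σ s • deriv γ (σ s), w s⟫
        = ⟪w s, deriv Γ s - deriv σ s • deriv γ (σ s)⟫ := real_inner_comm _ _
    have h1 : ⟪w s, deriv Γ s - deriv σ s • deriv γ (σ s)⟫ = ⟪w s, deriv Γ s⟫ := by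
      have e := inner_sub_right (𝕜 := ℝ) (w s) (deriv Γ s) (deriv σ s • deriv γ (σ s))
      rw [e, real_inner_smul_right, ho', mul_zero, sub_zero]
    have hdg : deriv g s = 2 * ⟪w s, deriv Γ s⟫ := by
      rw [hgd.deriv, h2, h1]; ring
    -- orthogonal decomposition bound
    have horth : ⟪w s, deriv Γ s⟫ = ⟪w s, deriv Γ s - u s • deriv γ (σ s)⟫ := by
      have e := inner_sub_right (𝕜 := ℝ) (w s) (deriv Γ s) (u s • deriv γ (σ s))
      rw [e, real_inner_smul_right, ho', mul_zero, sub_zero]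
    have hu_eq : ⟪deriv γ (σ s), deriv Γ s⟫ = u s := rfl
    have hip : ⟪deriv Γ s - u s • deriv γ (σ s), deriv Γ s - u s • deriv γ (σ s)⟫
        = 1 - u s ^ 2 := by
      rw [real_inner_sub_sub_self, real_inner_smul_right, real_inner_smul_left,
        real_inner_smul_right, real_inner_self_eq_norm_sq, real_inner_self_eq_norm_sq,
        hnorm, harcγ (σ s)]
      rw [real_inner_comm (deriv γ (σ s)) (deriv Γ s)]
      show 1 ^ 2 - 2 * (u s * u s) + u s * (u s * 1 ^ 2) = 1 - u s ^ 2
      ring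
    have hnormdec : ‖deriv Γ s - u s • deriv γ (σ s)‖ = Real.sqrt (1 - u s ^ 2) := by
      rw [norm_eq_sqrt_real_inner, hip]
    rw [hdg, abs_mul]
    calc |(2:ℝ)| * |⟪w s, deriv Γ s⟫|
        = 2 * |⟪w s, deriv Γ s - u s • deriv γ (σ s)⟫| := by rw [horth]; norm_num
      _ ≤ 2 * (‖w s‖ * ‖deriv Γ s - u s • deriv γ (σ s)‖) := by
          have := abs_real_inner_le_norm (w s) (deriv Γ s - u s • deriv γ (σ s))
          linarith
      _ = 2 * D s * Real.sqrt (1 - u s ^ 2) := by rw [hnormdec, hDdef]; ring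
  -- integrability
  have hFi_meas : AEStronglyMeasurable Fi volume := by
    apply AEStronglyMeasurable.sub aestronglyMeasurable_const
    apply AEStronglyMeasurable.mul
    · have hfc : Continuous (fcut ρ) := by
        unfold fcut
        exact (continuous_const.sub (continuous_id.div_const _)).max continuous_const
      exact (hfc.comp (by fun_prop : Continuous (fun s => D s ^ 2))).aestronglyMeasurable
    · exact (Measurable.inner ((hγ.continuous_deriv one_le_two).comp hσc).measurable
        (measurable_deriv Γ)).aestronglyMeasurable
  have hfcut01 : ∀ s, 0 ≤ fcut ρ (D s ^ 2) ∧ fcut ρ (D s ^ 2) ≤ 1 := by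
    intro s
    constructor
    · exact le_max_right _ _
    · apply max_le _ (by norm_num)
      have : 0 ≤ D s ^ 2 / ρ ^ 2 := by positivity
      linarith
  have hFi_bd : ∀ᵐ s : ℝ ∂volume, ‖Fi s‖ ≤ 2 := by
    filter_upwards [hu1] with s hus
    rw [Real.norm_eq_abs]
    show |1 - fcut ρ (D s ^ 2) * u s| ≤ 2
    have h1 := (hfcut01 s).1
    have h2 := (hfcut01 s).2
    have : |fcut ρ (D s ^ 2) * u s| ≤ 1 := by
      rw [abs_mul, abs_of_nonneg h1]
      calc fcut ρ (D s ^ 2) * |u s| ≤ 1 * 1 :=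
            mul_le_mul h2 hus (abs_nonneg _) (by norm_num)
        _ = 1 := by norm_num
    rw [abs_le] at this ⊢
    constructor <;> linarith [this.1, this.2]
  have hFi_int : ∀ p q : ℝ, IntervalIntegrable Fi volume p q := by
    intro p q
    rw [intervalIntegrable_iff]
    exact Measure.integrableOn_of_bounded (M := 2) measure_Ioc_lt_top.ne
      hFi_meas (ae_restrict_of_ae hFi_bd)
  have hdg_int : ∀ p q : ℝ, IntervalIntegrable (deriv g) volume p q := fun p q =>
    lip_deriv_intervalIntegrable hglip p q
  have hadg_int : ∀ p q : ℝ, IntervalIntegrable (fun x => |deriv g x|) volume p q :=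
    fun p q => (hdg_int p q).abs
  have hg_int : ∀ p q : ℝ, IntervalIntegrable g volume p q := fun p q =>
    hgc.intervalIntegrable p q
  -- periodicity of deriv g
  have hdgper : ∀ x, deriv g (x + L) = deriv g x := by
    intro x
    have hgfun : (fun y => g (y + L)) = g := funext fun y => hgper y
    calc deriv g (x + L) = deriv (fun y => g (y + L)) x :=
          (deriv_comp_add_const (f := g) (a := L) (x := x)).symm
      _ = deriv g x := by rw [hgfun]
  have habs_per : Function.Periodic (fun x => |deriv g x|) L := fun x => by
    show |deriv g (x + L)| = |deriv g x|
    rw [hdgper x]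
  set J : ℝ := ∫ x in (0:ℝ)..L, |deriv g x| with hJ
  -- key inequality for each t in the period
  have key1 : ∀ t ∈ Set.Icc (s₀ - L) s₀, 2 * g s₀ ≤ 2 * g t + J := by
    intro t ht
    have ht1 : t ≤ s₀ := ht.2
    have ht2 : s₀ ≤ t + L := by linarith [ht.1]
    have e_up : g s₀ - g t = ∫ x in t..s₀, deriv g x := (lip_ftc hglip ht1).symm
    have e_dn : g t - g s₀ = ∫ x in s₀..t + L, deriv g x := by
      rw [← hgper t]
      exact (lip_ftc hglip ht2).symm
    have b_up : (∫ x in t..s₀, deriv g x) ≤ ∫ x in t..s₀, |deriv g x| :=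
      intervalIntegral.integral_mono ht1 (hdg_int t s₀) (hadg_int t s₀)
        (fun x => le_abs_self _)
    have b_dn : -(∫ x in s₀..t + L, deriv g x) ≤ ∫ x in s₀..t + L, |deriv g x| := by
      rw [← intervalIntegral.integral_neg]
      exact intervalIntegral.integral_mono ht2 (hdg_int s₀ (t + L)).neg
        (hadg_int s₀ (t + L)) (fun x => neg_le_abs _)
    have hadd : (∫ x in t..s₀, |deriv g x|) + (∫ x in s₀..t + L, |deriv g x|)
        = ∫ x in t..t + L, |deriv g x| :=
      intervalIntegral.integral_add_adjacent_intervals (hadg_int t s₀) (hadg_int s₀ (t + L))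
    have hshift : (∫ x in t..t + L, |deriv g x|) = J := by
      rw [hJ]
      have := habs_per.intervalIntegral_add_eq t 0
      simpa using this
    have : 2 * (g s₀ - g t) = (∫ x in t..s₀, deriv g x) - ∫ x in s₀..t + L, deriv g x := by
      rw [← e_up, ← e_dn]; ring
    linarith [b_up, b_dn, hadd, hshift, this.le, this.ge]
  -- integrate key1 over the period
  have step13 : L * (2 * g s₀) ≤ 2 * (∫ x in (0:ℝ)..L, g x) + L * J := by
    have hle : s₀ - L ≤ s₀ := by linarith
    have lhs_eq : (∫ _ in (s₀ - L)..s₀, (2 * g s₀)) = L * (2 * g s₀) := by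
      rw [intervalIntegral.integral_const, smul_eq_mul]
      congr 1
      ring
    have rhs_int : IntervalIntegrable (fun t => 2 * g t + J) volume (s₀ - L) s₀ :=
      ((hg_int _ _).const_mul 2).add intervalIntegrable_const
    have mono := intervalIntegral.integral_mono_on hle intervalIntegrable_const rhs_int key1
    rw [lhs_eq] at mono
    have rhs_eq : (∫ t in (s₀ - L)..s₀, (2 * g t + J))
        = 2 * (∫ x in (s₀ - L)..s₀, g x) + L * J := by
      rw [intervalIntegral.integral_add ((hg_int _ _).const_mul 2) intervalIntegrable_const,
        intervalIntegral.integral_const_mul, intervalIntegral.integral_const, smul_eq_mul]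
      congr 2
      ring
    have per_eq : (∫ x in (s₀ - L)..s₀, g x) = ∫ x in (0:ℝ)..L, g x := by
      have := hgper.intervalIntegral_add_eq (s₀ - L) 0
      simpa using this
    rw [rhs_eq, per_eq] at mono
    exact mono
  -- comparison with F
  have hFint_eq : (∫ s in (0:ℝ)..L, (ρ ^ 2 * Fi s)) = ρ ^ 2 * F := by
    rw [intervalIntegral.integral_const_mul, hFdisc]
  have step14 : (∫ x in (0:ℝ)..L, g x) ≤ ρ ^ 2 * F := by
    rw [← hFint_eq]
    apply intervalIntegral.integral_mono_ae hL.le (hg_int 0 L) ((hFi_int 0 L).const_mul _)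
    filter_upwards [hu1] with s hus
    exact ptwise_i hρpos (hD0 s) (hDρ s) hus
  have step15 : J ≤ 2 * Real.sqrt 2 * ρ * F := by
    have : (∫ s in (0:ℝ)..L, (2 * Real.sqrt 2 * ρ * Fi s)) = 2 * Real.sqrt 2 * ρ * F := by
      rw [intervalIntegral.integral_const_mul, hFdisc]
    rw [hJ, ← this]
    apply intervalIntegral.integral_mono_ae hL.le (hadg_int 0 L) ((hFi_int 0 L).const_mul _)
    filter_upwards [hae] with s hs
    calc |deriv g s| ≤ 2 * D s * Real.sqrt (1 - u s ^ 2) := hs.1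
      _ ≤ 2 * Real.sqrt 2 * ρ * (1 - fcut ρ (D s ^ 2) * u s) :=
          ptwise_ii hρpos (hD0 s) (hDρ s) hs.2
      _ = 2 * Real.sqrt 2 * ρ * Fi s := by rw [hFidef]
  -- conclusion
  rw [hM]
  have hgoal : D s₀ ^ 2 = g s₀ := rfl
  rw [hgoal]
  rw [← mul_le_mul_iff_right₀ (show (0:ℝ) < 2 * L by linarith)]
  calc 2 * L * g s₀ = L * (2 * g s₀) := by ring
    _ ≤ 2 * (∫ x in (0:ℝ)..L, g x) + L * J := step13
    _ ≤ 2 * (ρ ^ 2 * F) + L * (2 * Real.sqrt 2 * ρ * F) := by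
        have h1 := step14
        have h2 := step15
        nlinarith [hL]
    _ = 2 * L * ((Real.sqrt 2 * ρ + ρ ^ 2 / L) * F) := by
        field_simp
        ring
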